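/- (Element bubble norm equivalence, uniform in the mesh size.) Let d ≥ 1 and k ≥ 0 be integers. There exists a constant γ₁ > 0, depending only on d and k, such that for every h > 0 and every polynomial function q : ℝ^d → ℝ of total degree at most k, γ₁ ∫_{(0,h)^d} q(x)² dx ≤ ∫_{(0,h)^d} ψ_h(x) q(x)² dx, where ψ_h is the element bubble function of the cube (0,h)^d, defined by ψ_h(x) := ∏_{i=1}^d 4 (x_i/h)(1 − x_i/h). -/

import Mathlib

open MeasureTheory

section BubbleSection

open Set MvPolynomial Pointwise

noncomputable section

variable {d : ℕ}

def bcube (d : ℕ) (h : ℝ) : Set (Fin d → ℝ) := Set.univ.pi fun _ : Fin d => Set.Ioo (0:ℝ) h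

lemma isOpen_bcube (h : ℝ) : IsOpen (bcube d h) :=
  isOpen_set_pi Set.finite_univ (fun _ _ => isOpen_Ioo)

lemma integrableOn_bcube {f : (Fin d → ℝ) → ℝ} (hf : Continuous f) (h : ℝ) :
    IntegrableOn f (bcube d h) := by
  have hc : IsCompact (Set.univ.pi fun _ : Fin d => Set.Icc (0:ℝ) h) :=
    isCompact_univ_pi (fun _ => isCompact_Icc)
  exact (hf.continuousOn.integrableOn_compact hc).mono_set
    (Set.pi_mono fun i _ => Set.Ioo_subset_Icc_self)

lemma bpoly_eq_zero {q : MvPolynomial (Fin d) ℝ}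
    (hq : ∀ x ∈ bcube d 1, MvPolynomial.eval x q = 0) : q = 0 := by
  have han : AnalyticOnNhd ℝ (fun x : Fin d → ℝ => MvPolynomial.eval x q) Set.univ := by
    have := AnalyticOnNhd.eval_continuousLinearMap
      (ContinuousLinearMap.id ℝ (Fin d → ℝ)) q
    simpa using this
  have hcmem : (fun _ : Fin d => (1:ℝ)/2) ∈ bcube d 1 := by
    intro i _; norm_num
  have hev : (fun x : Fin d → ℝ => MvPolynomial.eval x q)
      =ᶠ[nhds (fun _ : Fin d => (1:ℝ)/2)] 0 := by
    filter_upwards [(isOpen_bcube 1).mem_nhds hcmem] with x hx using hq x hx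
  have := han.eqOn_zero_of_preconnected_of_eventuallyEq_zero
    isPreconnected_univ (Set.mem_univ _) hev
  apply MvPolynomial.funext; intro x
  simpa using this (Set.mem_univ x)

lemma bintegral_pos {g : (Fin d → ℝ) → ℝ} (hg : Continuous g)
    (hnn : ∀ x ∈ bcube d 1, 0 ≤ g x) {x₀ : Fin d → ℝ} (hx₀ : x₀ ∈ bcube d 1)
    (hpos : 0 < g x₀) : 0 < ∫ x in bcube d 1, g x := by
  have hint : IntegrableOn g (bcube d 1) := integrableOn_bcube hg 1
  have hae : 0 ≤ᵐ[volume.restrict (bcube d 1)] g :=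
    (ae_restrict_iff' (isOpen_bcube 1).measurableSet).2 (ae_of_all _ hnn)
  rw [setIntegral_pos_iff_support_of_nonneg_ae hae hint]
  have hU : IsOpen (bcube d 1 ∩ g ⁻¹' Set.Ioi 0) :=
    (isOpen_bcube 1).inter (hg.isOpen_preimage _ isOpen_Ioi)
  have hsub : bcube d 1 ∩ g ⁻¹' Set.Ioi 0 ⊆ Function.support g ∩ bcube d 1 := by
    rintro x ⟨hx1, hx2⟩; exact ⟨ne_of_gt hx2, hx1⟩
  calc (0:ENNReal) < volume (bcube d 1 ∩ g ⁻¹' Set.Ioi 0) :=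
        hU.measure_pos volume ⟨x₀, hx₀, hpos⟩
    _ ≤ volume (Function.support g ∩ bcube d 1) := measure_mono hsub


def scaleP (h : ℝ) (q : MvPolynomial (Fin d) ℝ) : MvPolynomial (Fin d) ℝ :=
  MvPolynomial.bind₁ (fun i => MvPolynomial.C h * MvPolynomial.X i) q

lemma eval_scaleP (h : ℝ) (q : MvPolynomial (Fin d) ℝ) (x : Fin d → ℝ) :
    MvPolynomial.eval x (scaleP h q) = MvPolynomial.eval (h • x) q := by
  show MvPolynomial.eval x (MvPolynomial.bind₁ _ q) = _
  rw [MvPolynomial.eval, MvPolynomial.eval₂Hom_bind₁]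
  refine MvPolynomial.eval₂Hom_congr rfl (funext fun i => ?_) rfl
  simp [Pi.smul_apply, smul_eq_mul]

lemma scaleP_totalDegree_le (h : ℝ) (q : MvPolynomial (Fin d) ℝ) :
    (scaleP h q).totalDegree ≤ q.totalDegree := by
  classical
  conv_lhs => rw [scaleP, q.as_sum]
  rw [map_sum]
  refine (MvPolynomial.totalDegree_finset_sum _ _).trans (Finset.sup_le fun v hv => ?_)
  rw [MvPolynomial.bind₁_monomial]
  refine (MvPolynomial.totalDegree_mul _ _).trans ?_
  rw [MvPolynomial.totalDegree_C, zero_add]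
  refine (MvPolynomial.totalDegree_finset_prod _ _).trans ?_
  have h1 : ∀ i, ((MvPolynomial.C h * MvPolynomial.X i : MvPolynomial (Fin d) ℝ) ^ v i).totalDegree ≤ v i := by
    intro i
    refine (MvPolynomial.totalDegree_pow _ _).trans ?_
    have : (MvPolynomial.C h * MvPolynomial.X i : MvPolynomial (Fin d) ℝ).totalDegree ≤ 1 := by
      refine (MvPolynomial.totalDegree_mul _ _).trans ?_
      simp [MvPolynomial.totalDegree_X]
    calc v i * (MvPolynomial.C h * MvPolynomial.X i : MvPolynomial (Fin d) ℝ).totalDegree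
        ≤ v i * 1 := Nat.mul_le_mul_left _ this
      _ = v i := by ring
  calc ∑ i ∈ v.support, ((MvPolynomial.C h * MvPolynomial.X i : MvPolynomial (Fin d) ℝ) ^ v i).totalDegree
      ≤ ∑ i ∈ v.support, v i := Finset.sum_le_sum fun i _ => h1 i
    _ = v.sum fun _ e => e := rfl
    _ ≤ q.totalDegree := MvPolynomial.le_totalDegree hv

lemma smul_bcube {h : ℝ} (hh : 0 < h) : h • bcube d 1 = bcube d h := by
  ext x
  rw [Set.mem_smul_set_iff_inv_smul_mem₀ hh.ne']
  simp only [bcube, Set.mem_pi, Set.mem_univ, forall_true_left, Set.mem_Ioo,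
    Pi.smul_apply, smul_eq_mul]
  refine forall_congr' fun i => ?_
  rw [inv_mul_eq_div, div_lt_one hh, div_pos_iff]
  constructor
  · rintro ⟨(⟨h1, -⟩ | ⟨-, h2⟩), h3⟩
    · exact ⟨h1, h3⟩
    · exact absurd hh (not_lt.2 h2.le)
  · rintro ⟨h1, h2⟩
    exact ⟨Or.inl ⟨h1, hh⟩, h2⟩

lemma bintegral_scale {h : ℝ} (hh : 0 < h) (f : (Fin d → ℝ) → ℝ) :
    ∫ x in bcube d h, f x = h ^ d * ∫ x in bcube d 1, f (h • x) := by
  have := MeasureTheory.Measure.setIntegral_comp_smul_of_pos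
    (volume : Measure (Fin d → ℝ)) f (bcube d 1) hh
  rw [smul_bcube hh, Module.finrank_fintype_fun_eq_card, Fintype.card_fin] at this
  rw [this, smul_eq_mul, ← mul_assoc, mul_inv_cancel₀ (by positivity), one_mul]


lemma continuous_quad (w : (Fin d → ℝ) → ℝ) (hw : Continuous w) {n : ℕ}
    (P : Fin n → MvPolynomial (Fin d) ℝ) :
    Continuous fun c : Fin n → ℝ =>
      ∫ x in bcube d 1, w x * (∑ i, c i * MvPolynomial.eval x (P i))^2 := by
  have key : ∀ c : Fin n → ℝ,
      ∫ x in bcube d 1, w x * (∑ i, c i * MvPolynomial.eval x (P i))^2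
        = ∑ p : Fin n × Fin n, c p.1 * c p.2 *
            ∫ x in bcube d 1,
              w x * (MvPolynomial.eval x (P p.1) * MvPolynomial.eval x (P p.2)) := by
    intro c
    have hpt : ∀ x : Fin d → ℝ, w x * (∑ i, c i * MvPolynomial.eval x (P i))^2
        = ∑ p : Fin n × Fin n, c p.1 * c p.2 *
            (w x * (MvPolynomial.eval x (P p.1) * MvPolynomial.eval x (P p.2))) := by
      intro x
      rw [Fintype.sum_prod_type, pow_two, Finset.sum_mul_sum, Finset.mul_sum]
      refine Finset.sum_congr rfl fun i _ => ?_
      rw [Finset.mul_sum]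
      exact Finset.sum_congr rfl fun j _ => by ring
    simp_rw [hpt]
    rw [integral_finset_sum]
    · exact Finset.sum_congr rfl fun p _ => integral_const_mul _ _
    · intro p _
      refine integrableOn_bcube ?_ 1
      exact (continuous_const.mul ((hw.mul ((MvPolynomial.continuous_eval _).mul
        (MvPolynomial.continuous_eval _)))))
  rw [show (fun c : Fin n → ℝ =>
      ∫ x in bcube d 1, w x * (∑ i, c i * MvPolynomial.eval x (P i))^2)
      = fun c : Fin n → ℝ => ∑ p : Fin n × Fin n, c p.1 * c p.2 *
          ∫ x in bcube d 1,
            w x * (MvPolynomial.eval x (P p.1) * MvPolynomial.eval x (P p.2))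
    from funext key]
  refine continuous_finset_sum _ fun p _ =>
    (((continuous_apply p.1).mul (continuous_apply p.2)).mul continuous_const)


end

set_option synthInstance.maxHeartbeats 1000000 in
set_option maxHeartbeats 2000000 in
theorem bubble_unit (d k : ℕ) :
    ∃ γ : ℝ, 0 < γ ∧ ∀ q : MvPolynomial (Fin d) ℝ, q.totalDegree ≤ k →
      γ * ∫ x in bcube d 1, (MvPolynomial.eval x q)^2 ≤
        ∫ x in bcube d 1,
          (∏ i : Fin d, 4 * x i * (1 - x i)) * (MvPolynomial.eval x q)^2 := by
  classical
  set ψ : (Fin d → ℝ) → ℝ := fun x => ∏ i : Fin d, 4 * x i * (1 - x i) with hψdef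
  have hψcont : Continuous ψ := by
    refine continuous_finset_prod _ fun i _ => ?_
    exact (continuous_const.mul (continuous_apply i)).mul
      (continuous_const.sub (continuous_apply i))
  have hψpos : ∀ x ∈ bcube d 1, 0 < ψ x := by
    intro x hx
    refine Finset.prod_pos fun i _ => ?_
    have hxi := hx i (Set.mem_univ i)
    simp only [Set.mem_Ioo] at hxi
    nlinarith [hxi.1, hxi.2]
  set V := MvPolynomial.restrictTotalDegree (Fin d) ℝ k with hVdef
  haveI : Module.Free ℝ V := Module.Free.of_divisionRing ℝ V
  haveI : Module.Finite ℝ V := inferInstance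
  set n := Module.finrank ℝ V with hndef
  let b : Module.Basis (Fin n) ℝ V := Module.finBasis ℝ V
  set Q : (Fin n → ℝ) → MvPolynomial (Fin d) ℝ :=
    fun c => ((b.equivFun.symm c : V) : MvPolynomial (Fin d) ℝ) with hQdef
  have hevalQ : ∀ (c : Fin n → ℝ) (x : Fin d → ℝ),
      MvPolynomial.eval x (Q c) = ∑ i, c i * MvPolynomial.eval x ((b i : V) : MvPolynomial (Fin d) ℝ) := by
    intro c x
    simp only [hQdef, Module.Basis.equivFun_symm_apply]
    rw [Submodule.coe_sum]
    rw [map_sum]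
    refine Finset.sum_congr rfl fun i _ => ?_
    rw [Submodule.coe_smul, MvPolynomial.smul_eval]
  have hQsmul : ∀ (t : ℝ) (c : Fin n → ℝ), Q (t • c) = t • Q c := by
    intro t c
    simp only [hQdef]
    rw [_root_.map_smul, Submodule.coe_smul]
  have hQzero : Q 0 = 0 := by simp [hQdef]
  have hQne : ∀ c : Fin n → ℝ, c ≠ 0 → Q c ≠ 0 := by
    intro c hc h0
    apply hc
    have : (b.equivFun.symm c : V) = 0 := by
      exact_mod_cast Subtype.coe_injective (by simpa [hQdef] using h0)
    simpa using b.equivFun.symm.injective (by simpa using this)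
  -- the two quadratic functionals
  set f : (Fin n → ℝ) → ℝ :=
    fun c => ∫ x in bcube d 1, ψ x * (MvPolynomial.eval x (Q c))^2 with hfdef
  set g : (Fin n → ℝ) → ℝ :=
    fun c => ∫ x in bcube d 1, (MvPolynomial.eval x (Q c))^2 with hgdef
  have hfcont : Continuous f := by
    have hfe : f = fun c : Fin n → ℝ => ∫ x in bcube d 1,
        ψ x * (∑ i, c i * MvPolynomial.eval x ((b i : V) : MvPolynomial (Fin d) ℝ))^2 := by
      funext c
      show (∫ x in bcube d 1, ψ x * (MvPolynomial.eval x (Q c))^2) = _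
      have hx : (fun x : Fin d → ℝ => ψ x * (MvPolynomial.eval x (Q c))^2)
          = fun x => ψ x * (∑ i, c i * MvPolynomial.eval x ((b i : V) : MvPolynomial (Fin d) ℝ))^2 :=
        _root_.funext fun x => by rw [hevalQ]
      rw [hx]
    rw [hfe]
    exact continuous_quad ψ hψcont _
  have hgcont : Continuous g := by
    have hge : g = fun c : Fin n → ℝ => ∫ x in bcube d 1,
        (fun _ => (1:ℝ)) x * (∑ i, c i * MvPolynomial.eval x ((b i : V) : MvPolynomial (Fin d) ℝ))^2 := by
      funext c
      show (∫ x in bcube d 1, (MvPolynomial.eval x (Q c))^2) = _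
      have hx : (fun x : Fin d → ℝ => (MvPolynomial.eval x (Q c))^2)
          = fun x => (fun _ => (1:ℝ)) x * (∑ i, c i * MvPolynomial.eval x ((b i : V) : MvPolynomial (Fin d) ℝ))^2 :=
        _root_.funext fun x => by rw [one_mul, hevalQ]
      rw [hx]
    rw [hge]
    exact continuous_quad _ continuous_const _
  -- positivity
  have hfpos : ∀ c : Fin n → ℝ, c ≠ 0 → 0 < f c := by
    intro c hc
    obtain ⟨x₀, hx₀, hx₀ne⟩ : ∃ x₀ ∈ bcube d 1, MvPolynomial.eval x₀ (Q c) ≠ 0 := by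
      by_contra hcon
      push_neg at hcon
      exact hQne c hc (bpoly_eq_zero hcon)
    refine bintegral_pos (hψcont.mul ((MvPolynomial.continuous_eval _).pow 2))
      (fun x hx => mul_nonneg (hψpos x hx).le (sq_nonneg _)) hx₀
      (mul_pos (hψpos x₀ hx₀)
        (lt_of_le_of_ne (sq_nonneg _) (Ne.symm (pow_ne_zero _ hx₀ne))))
  have hgpos : ∀ c : Fin n → ℝ, c ≠ 0 → 0 < g c := by
    intro c hc
    obtain ⟨x₀, hx₀, hx₀ne⟩ : ∃ x₀ ∈ bcube d 1, MvPolynomial.eval x₀ (Q c) ≠ 0 := by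
      by_contra hcon
      push_neg at hcon
      exact hQne c hc (bpoly_eq_zero hcon)
    exact bintegral_pos ((MvPolynomial.continuous_eval _).pow 2)
      (fun x _ => sq_nonneg _) hx₀
      (lt_of_le_of_ne (sq_nonneg _) (Ne.symm (pow_ne_zero _ hx₀ne)))
  -- nontriviality / nonempty sphere
  have hnpos : 0 < n := by
    haveI : Nontrivial V := by
      refine ⟨⟨⟨1, ?_⟩, 0, ?_⟩⟩
      · rw [MvPolynomial.mem_restrictTotalDegree]
        simp [MvPolynomial.totalDegree_one]
      · intro hcon
        exact one_ne_zero (α := MvPolynomial (Fin d) ℝ) (congrArg Subtype.val hcon)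
    exact Module.finrank_pos
  haveI : Nonempty (Fin n) := ⟨⟨0, hnpos⟩⟩
  -- sphere compactness
  have hScpt : IsCompact (Metric.sphere (0 : Fin n → ℝ) 1) := isCompact_sphere _ _
  have hSne : (Metric.sphere (0 : Fin n → ℝ) 1).Nonempty :=
    NormedSpace.sphere_nonempty.mpr zero_le_one
  obtain ⟨c₀, hc₀S, hmin⟩ := hScpt.exists_isMinOn hSne hfcont.continuousOn
  obtain ⟨c₁, hc₁S, hmax⟩ := hScpt.exists_isMaxOn hSne hgcont.continuousOn
  have hsphere_ne : ∀ c : Fin n → ℝ, c ∈ Metric.sphere (0 : Fin n → ℝ) 1 → c ≠ 0 := by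
    intro c hcS hc0
    rw [mem_sphere_iff_norm] at hcS
    simp [hc0] at hcS
  have hm : 0 < f c₀ := hfpos c₀ (hsphere_ne c₀ hc₀S)
  have hM : 0 < g c₁ := lt_of_lt_of_le (hgpos c₀ (hsphere_ne c₀ hc₀S)) (hmax hc₀S)
  refine ⟨f c₀ / g c₁, div_pos hm hM, ?_⟩
  intro q hdeg
  by_cases hq0 : q = 0
  · simp [hq0]
  · have hqV : q ∈ V := by
      rw [hVdef, MvPolynomial.mem_restrictTotalDegree]; exact hdeg
    set c : Fin n → ℝ := b.equivFun ⟨q, hqV⟩ with hcdef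
    have hQc : Q c = q := by
      simp only [hQdef, hcdef, LinearEquiv.symm_apply_apply]
    have hcne : c ≠ 0 := by
      intro h0
      exact hq0 (by rw [← hQc, h0, hQzero])
    set t : ℝ := ‖c‖ with htdef
    have ht : 0 < t := norm_pos_iff.2 hcne
    set u : Fin n → ℝ := t⁻¹ • c with hudef
    have huS : u ∈ Metric.sphere (0 : Fin n → ℝ) 1 := by
      rw [mem_sphere_iff_norm, sub_zero, hudef, norm_smul, norm_inv, norm_norm]
      exact inv_mul_cancel₀ ht.ne'
    have hcu : c = t • u := by
      rw [hudef, smul_smul, mul_inv_cancel₀ ht.ne', one_smul]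
    have hvq : ∀ x : Fin d → ℝ,
        MvPolynomial.eval x q = t * MvPolynomial.eval x (Q u) := by
      intro x
      rw [← hQc, hcu, hQsmul, MvPolynomial.smul_eval]
    have e1 : (∫ x in bcube d 1, (MvPolynomial.eval x q)^2)
        = t^2 * ∫ x in bcube d 1, (MvPolynomial.eval x (Q u))^2 := by
      rw [← integral_const_mul]
      exact congrArg _ (_root_.funext fun x => by rw [hvq]; ring)
    have e2 : (∫ x in bcube d 1, ψ x * (MvPolynomial.eval x q)^2)
        = t^2 * ∫ x in bcube d 1, ψ x * (MvPolynomial.eval x (Q u))^2 := by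
      rw [← integral_const_mul]
      exact congrArg _ (_root_.funext fun x => by rw [hvq]; ring)
    have hfu : f c₀ ≤ f u := hmin huS
    have hgu : g u ≤ g c₁ := hmax huS
    have hguz : 0 < g u := hgpos u (hsphere_ne u huS)
    show (f c₀ / g c₁) * ∫ x in bcube d 1, (MvPolynomial.eval x q)^2 ≤
        ∫ x in bcube d 1, ψ x * (MvPolynomial.eval x q)^2
    rw [e1, e2]
    have step1 : (f c₀ / g c₁) * (t^2 * g u) ≤ (f c₀ / g c₁) * (t^2 * g c₁) := by
      refine mul_le_mul_of_nonneg_left ?_ (div_pos hm hM).le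
      exact mul_le_mul_of_nonneg_left hgu (sq_nonneg t)
    have step2 : (f c₀ / g c₁) * (t^2 * g c₁) = t^2 * f c₀ := by
      field_simp
    have step3 : t^2 * f c₀ ≤ t^2 * f u :=
      mul_le_mul_of_nonneg_left hfu (sq_nonneg t)
    calc (f c₀ / g c₁) * (t^2 * g u) ≤ (f c₀ / g c₁) * (t^2 * g c₁) := step1
      _ = t^2 * f c₀ := step2
      _ ≤ t^2 * f u := step3


/-- Element bubble norm equivalence, uniform in the mesh size: there is
`γ₁ > 0` depending only on `d` and `k` such that for all `h > 0` and all
polynomials `q` of total degree at most `k`,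
`γ₁ ∫_{(0,h)^d} q² ≤ ∫_{(0,h)^d} ψ_h q²`. -/

theorem stmt_10 (d k : ℕ) (hd : 1 ≤ d) :
    ∃ γ₁ : ℝ, 0 < γ₁ ∧
      ∀ h : ℝ, 0 < h →
        ∀ q : MvPolynomial (Fin d) ℝ, q.totalDegree ≤ k →
          γ₁ * ∫ x in Set.univ.pi (fun _ : Fin d => Set.Ioo (0:ℝ) h),
              (MvPolynomial.eval x q) ^ 2 ≤
            ∫ x in Set.univ.pi (fun _ : Fin d => Set.Ioo (0:ℝ) h),
              (∏ i : Fin d, 4 * (x i / h) * (1 - x i / h)) *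
                (MvPolynomial.eval x q) ^ 2 := by
  obtain ⟨γ, hγ, hγle⟩ := bubble_unit d k
  refine ⟨γ, hγ, ?_⟩
  intro h hh q hdeg
  have hq' : (scaleP h q).totalDegree ≤ k := (scaleP_totalDegree_le h q).trans hdeg
  have key := hγle (scaleP h q) hq'
  have eL : (∫ x in bcube d h, (MvPolynomial.eval x q)^2)
      = h^d * ∫ x in bcube d 1, (MvPolynomial.eval x (scaleP h q))^2 := by
    rw [bintegral_scale hh]
    congr 1
    exact congrArg _ (_root_.funext fun x => by rw [eval_scaleP])
  have eR : (∫ x in bcube d h,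
        (∏ i : Fin d, 4 * (x i / h) * (1 - x i / h)) * (MvPolynomial.eval x q)^2)
      = h^d * ∫ x in bcube d 1,
          (∏ i : Fin d, 4 * x i * (1 - x i)) * (MvPolynomial.eval x (scaleP h q))^2 := by
    rw [bintegral_scale hh]
    congr 1
    refine congrArg _ (_root_.funext fun x => ?_)
    rw [eval_scaleP]
    congr 1
    refine Finset.prod_congr rfl fun i _ => ?_
    rw [Pi.smul_apply, smul_eq_mul, mul_div_cancel_left₀ _ hh.ne']
  show γ * ∫ x in bcube d h, (MvPolynomial.eval x q)^2 ≤
      ∫ x in bcube d h,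
        (∏ i : Fin d, 4 * (x i / h) * (1 - x i / h)) * (MvPolynomial.eval x q)^2
  rw [eL, eR, mul_left_comm]
  exact mul_le_mul_of_nonneg_left key (by positivity)

end BubbleSection
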